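/- Let K be a field, let p ≥ 2 and n ≥ p, and let f_1,…,f_{p−1} ∈ K[z_1,…,z_n] have total degree at most d. Let J be the (p−1)×n Jacobian matrix with entries ∂f_i/∂z_k, regarded over the rational function field K(z_1,…,z_n), and suppose the (p−1)×(p−1) submatrix formed by the first p−1 columns of J is invertible over K(z_1,…,z_n); denote by δ ∈ K[z_1,…,z_n] its determinant. Then the kernel of J, as a K(z_1,…,z_n)-subspace of K(z_1,…,z_n)^n, has dimension n−p+1 and admits a basis B_1,…,B_{n−p+1} such that every entry of every B_i can be written as a quotient u/δ where u ∈ K[z_1,…,z_n] has total degree at most (p−1)(d−1) and δ (which also has total degree at most (p−1)(d−1)) is the common denominator. -/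

import Mathlib

open MvPolynomial

/-- The Jacobian matrix of `f_1, …, f_q ∈ K[z_1,…,z_n]`, viewed over the rational
function field `K(z_1,…,z_n)`. -/
noncomputable def jacobianFF {K : Type*} [Field K] {q n : ℕ}
    (f : Fin q → MvPolynomial (Fin n) K) :
    Matrix (Fin q) (Fin n) (FractionRing (MvPolynomial (Fin n) K)) :=
  Matrix.of fun i k =>
    algebraMap (MvPolynomial (Fin n) K) (FractionRing (MvPolynomial (Fin n) K))
      (MvPolynomial.pderiv k (f i))

/-- The determinant `δ ∈ K[z_1,…,z_n]` of the square submatrix of the Jacobian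
matrix formed by its first `q` columns. -/
noncomputable def jacSubDet {K : Type*} [Field K] {q n : ℕ} (hqn : q ≤ n)
    (f : Fin q → MvPolynomial (Fin n) K) : MvPolynomial (Fin n) K :=
  Matrix.det (Matrix.of fun i j : Fin q => MvPolynomial.pderiv (Fin.castLE hqn j) (f i))

lemma pderiv_totalDegree_le {K : Type*} [CommRing K] {σ : Type*} [DecidableEq σ]
    (f : MvPolynomial σ K) (i : σ) {d : ℕ} (h : f.totalDegree ≤ d) :
    (pderiv i f).totalDegree ≤ d - 1 := by
  conv_lhs => rw [f.as_sum]
  rw [map_sum]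
  refine (totalDegree_finset_sum _ _).trans (Finset.sup_le ?_)
  intro s hs
  rw [pderiv_monomial]
  rcases Nat.eq_zero_or_pos (s i) with h0 | h1
  · simp [h0]
  · refine (totalDegree_monomial_le _ _).trans ?_
    have hle : Finsupp.single i 1 ≤ s := by
      rwa [Finsupp.single_le_iff]
    have hadd : (s - Finsupp.single i 1) + Finsupp.single i 1 = s :=
      tsub_add_cancel_of_le hle
    have hsum : (s - Finsupp.single i 1).sum (fun _ e => e) + 1 = s.sum (fun _ e => e) := by
      conv_rhs => rw [← hadd]
      rw [Finsupp.sum_add_index' (fun _ => rfl) (fun _ _ _ => rfl),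
        Finsupp.sum_single_index rfl]
    have h2 := le_totalDegree hs
    simp only [Function.id_def] at h2 hsum ⊢
    omega

lemma det_totalDegree_le {K : Type*} [CommRing K] {σ : Type*} {m : ℕ}
    (M : Matrix (Fin m) (Fin m) (MvPolynomial σ K)) (D : ℕ)
    (h : ∀ i j, (M i j).totalDegree ≤ D) :
    M.det.totalDegree ≤ m * D := by
  rw [Matrix.det_apply']
  refine (totalDegree_finset_sum _ _).trans (Finset.sup_le ?_)
  intro σ' _
  refine (totalDegree_mul _ _).trans ?_
  have h1 : ((Equiv.Perm.sign σ' : ℤ) : MvPolynomial σ K).totalDegree = 0 := by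
    rw [show ((Equiv.Perm.sign σ' : ℤ) : MvPolynomial σ K)
        = C ((Equiv.Perm.sign σ' : ℤ) : K) from (map_intCast (C : K →+* MvPolynomial σ K) _).symm,
      totalDegree_C]
  rw [h1, zero_add]
  refine (totalDegree_finset_prod _ _).trans ?_
  calc ∑ i, (M (σ' i) i).totalDegree ≤ ∑ _i : Fin m, D :=
        Finset.sum_le_sum (fun i _ => h _ _)
    _ = m * D := by simp [Finset.sum_const, Nat.smul_one_eq_cast]

set_option maxHeartbeats 1000000 in
/-- if `f_1,…,f_{p-1} ∈ K[z_1,…,z_n]` have degree at most `d` and the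
submatrix of the Jacobian formed by the first `p-1` columns is invertible over
`K(z_1,…,z_n)` (equivalently, its determinant `δ` is nonzero), then the kernel of the
Jacobian has dimension `n-p+1` and admits a basis whose entries are quotients `u/δ`
with `deg u ≤ (p-1)(d-1)`; moreover `deg δ ≤ (p-1)(d-1)`. -/
theorem jacobian_kernel_basis_degree_bound {K : Type*} [Field K]
    (p n d : ℕ) (hp : 2 ≤ p) (hn : p ≤ n)
    (f : Fin (p - 1) → MvPolynomial (Fin n) K)
    (hdeg : ∀ i, (f i).totalDegree ≤ d)
    (hδ : jacSubDet (le_trans (Nat.sub_le p 1) hn) f ≠ 0) :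
    Module.finrank (FractionRing (MvPolynomial (Fin n) K))
        (LinearMap.ker (Matrix.mulVecLin (jacobianFF f))) = n - p + 1 ∧
    (jacSubDet (le_trans (Nat.sub_le p 1) hn) f).totalDegree ≤ (p - 1) * (d - 1) ∧
    ∃ B : Module.Basis (Fin (n - p + 1)) (FractionRing (MvPolynomial (Fin n) K))
        (LinearMap.ker (Matrix.mulVecLin (jacobianFF f))),
      ∀ (i : Fin (n - p + 1)) (k : Fin n),
        ∃ u : MvPolynomial (Fin n) K, u.totalDegree ≤ (p - 1) * (d - 1) ∧
          (B i : Fin n → FractionRing (MvPolynomial (Fin n) K)) k =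
            algebraMap (MvPolynomial (Fin n) K) (FractionRing (MvPolynomial (Fin n) K)) u /
              algebraMap (MvPolynomial (Fin n) K) (FractionRing (MvPolynomial (Fin n) K))
                (jacSubDet (le_trans (Nat.sub_le p 1) hn) f) := by
    classical
  have hqn : p - 1 ≤ n := le_trans (Nat.sub_le p 1) hn
  set φ : MvPolynomial (Fin n) K →+* FractionRing (MvPolynomial (Fin n) K) :=
    algebraMap (MvPolynomial (Fin n) K) (FractionRing (MvPolynomial (Fin n) K)) with hφ
  set M : Matrix (Fin (p - 1)) (Fin (p - 1)) (MvPolynomial (Fin n) K) :=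
    Matrix.of fun i j => pderiv (Fin.castLE hqn j) (f i) with hM
  set δ : MvPolynomial (Fin n) K := jacSubDet hqn f with hδdef
  have hMdet : M.det = δ := rfl
  have hΔ : φ δ ≠ 0 := by
    rw [hφ, map_ne_zero_iff _ (IsFractionRing.injective (MvPolynomial (Fin n) K)
      (FractionRing (MvPolynomial (Fin n) K)))]
    exact hδ
  set m := n - (p - 1) with hm
  have hmadd : p - 1 + m = n := by omega
  have embH : ∀ j : Fin m, p - 1 + (j : ℕ) < n := fun j => by omega
  set emb : Fin m → Fin n := fun j => ⟨p - 1 + j, embH j⟩ with hemb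
  set g : Fin m → Fin (p - 1) → (MvPolynomial (Fin n) K) := fun i r => pderiv (emb i) (f r) with hg
  set u : Fin m → Fin n → (MvPolynomial (Fin n) K) := fun i k =>
    if h : (k : ℕ) < p - 1 then -(Matrix.cramer M (g i) ⟨k, h⟩)
    else if (k : ℕ) = p - 1 + i then δ else 0 with hu
  set w : Fin m → Fin n → FractionRing (MvPolynomial (Fin n) K) := fun i k => φ (u i k) / φ δ with hw
  -- value of u at the embedded coordinates
  have hu_emb : ∀ i j, u i (emb j) = if j = i then δ else 0 := by
    intro i j
    simp only [hu]
    have h1 : ¬ ((emb j : ℕ) < p - 1) := by simp [hemb]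
    rw [dif_neg h1]
    have h2 : ((emb j : ℕ) = p - 1 + i) ↔ j = i := by
      simp [hemb, Fin.ext_iff]
    simp only [h2]
  have hw_emb : ∀ i j, w i (emb j) = if j = i then 1 else 0 := by
    intro i j
    simp only [hw, hu_emb]
    split
    · exact div_self hΔ
    · simp
  -- e : reindexing equivalence
  set e : Fin (p - 1 + m) ≃ Fin n := finCongr hmadd with he
  have he_cast : ∀ j : Fin (p - 1), e (Fin.castAdd m j) = Fin.castLE hqn j := by
    intro j; ext; simp [he]
  have he_nat : ∀ j : Fin m, e (Fin.natAdd (p - 1) j) = emb j := by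
    intro j; ext; simp [he, hemb]
  -- the vectors w i lie in the kernel
  have hpoly : ∀ i r, ∑ k : Fin n, pderiv k (f r) * u i k = 0 := by
    intro i r
    rw [← Fintype.sum_equiv e (fun k => pderiv (e k) (f r) * u i (e k))
      (fun k => pderiv k (f r) * u i k) (fun k => rfl)]
    rw [Fin.sum_univ_add]
    have hfirst : ∀ j : Fin (p - 1),
        pderiv (e (Fin.castAdd m j)) (f r) * u i (e (Fin.castAdd m j))
          = M r j * (-(Matrix.cramer M (g i) j)) := by
      intro j
      rw [he_cast]
      have hjlt : ((Fin.castLE hqn j : Fin n) : ℕ) < p - 1 := j.isLt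
      simp only [hu, dif_pos hjlt]
      congr 1
    have hsecond : ∀ j : Fin m,
        pderiv (e (Fin.natAdd (p - 1) j)) (f r) * u i (e (Fin.natAdd (p - 1) j))
          = if j = i then g i r * δ else 0 := by
      intro j
      rw [he_nat, hu_emb]
      split
      · rename_i hji; subst hji; rfl
      · simp
    rw [Finset.sum_congr rfl (fun j _ => hfirst j),
      Finset.sum_congr rfl (fun j _ => hsecond j)]
    have hcr : ∑ j : Fin (p - 1), M r j * (-(Matrix.cramer M (g i) j))
        = -((M.mulVec (Matrix.cramer M (g i))) r) := by
      simp [Matrix.mulVec, dotProduct, Finset.sum_neg_distrib]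
    rw [hcr, Matrix.mulVec_cramer, Finset.sum_ite_eq' Finset.univ i]
    simp only [Finset.mem_univ, if_true, hMdet, Pi.smul_apply, smul_eq_mul]
    ring
  have hker : ∀ i, (jacobianFF f).mulVecLin (w i) = 0 := by
    intro i
    funext r
    rw [Matrix.mulVecLin_apply]
    show ∑ k : Fin n, jacobianFF f r k * w i k = 0
    have : ∀ k : Fin n, jacobianFF f r k * w i k = φ (pderiv k (f r) * u i k) / φ δ := by
      intro k
      simp only [hw, map_mul]
      show φ (pderiv k (f r)) * (φ (u i k) / φ δ) = _
      rw [mul_div_assoc]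
    rw [Finset.sum_congr rfl (fun k _ => this k), ← Finset.sum_div, ← map_sum, hpoly]
    simp
  -- linear independence
  have hli : LinearIndependent (FractionRing (MvPolynomial (Fin n) K)) w := by
    rw [Fintype.linearIndependent_iff]
    intro c hc j
    have h0 := congrFun hc (emb j)
    simp only [Finset.sum_apply, Pi.smul_apply, smul_eq_mul, hw_emb, mul_ite, mul_one,
      mul_zero, Finset.sum_ite_eq Finset.univ j c, Finset.mem_univ, if_true,
      Pi.zero_apply] at h0
    exact h0
  -- spanning
  have hrepr : ∀ v : Fin n → FractionRing (MvPolynomial (Fin n) K),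
      (jacobianFF f).mulVecLin v = 0 →
      v = ∑ j : Fin m, v (emb j) • w j := by
    intro v hv
    set v' : Fin n → FractionRing (MvPolynomial (Fin n) K) := v - ∑ j : Fin m, v (emb j) • w j with hv'
    have hv'emb : ∀ j, v' (emb j) = 0 := by
      intro j
      rw [hv']
      simp only [Pi.sub_apply, Finset.sum_apply, Pi.smul_apply, smul_eq_mul, hw_emb,
        mul_ite, mul_one, mul_zero, Finset.sum_ite_eq Finset.univ j, Finset.mem_univ,
        if_true, sub_self]
    have hv'ker : (jacobianFF f).mulVecLin v' = 0 := by
      rw [hv', map_sub, map_sum, hv]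
      simp only [map_smul, hker, smul_zero, Finset.sum_const_zero, sub_zero]
    set A : Matrix (Fin (p - 1)) (Fin (p - 1)) (FractionRing (MvPolynomial (Fin n) K)) := M.map φ with hA
    have hAdet : A.det ≠ 0 := by
      rw [hA, ← RingHom.mapMatrix_apply, ← RingHom.map_det, hMdet]
      exact hΔ
    set x : Fin (p - 1) → FractionRing (MvPolynomial (Fin n) K) := fun j => v' (Fin.castLE hqn j) with hx
    have hAx : A.mulVec x = 0 := by
      funext r
      have h0 := congrFun hv'ker r
      rw [Matrix.mulVecLin_apply] at h0
      have hsplit : (jacobianFF f).mulVec v' r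
          = ∑ k : Fin (p - 1 + m), jacobianFF f r (e k) * v' (e k) := by
        rw [Fintype.sum_equiv e (fun k => jacobianFF f r (e k) * v' (e k))
          (fun k => jacobianFF f r k * v' k) (fun k => rfl)]
        rfl
      rw [hsplit, Fin.sum_univ_add] at h0
      have h2 : ∀ j : Fin m, jacobianFF f r (e (Fin.natAdd (p - 1) j))
          * v' (e (Fin.natAdd (p - 1) j)) = 0 := by
        intro j
        rw [he_nat, hv'emb, mul_zero]
      rw [Finset.sum_congr rfl (fun j _ => h2 j), Finset.sum_const_zero, add_zero] at h0
      simp only [Pi.zero_apply] at h0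
      show ∑ j : Fin (p - 1), A r j * x j = 0
      rw [← h0]
      refine Finset.sum_congr rfl (fun j _ => ?_)
      rw [he_cast]
      rfl
    have hxz : x = 0 := by
      have hinj : Function.Injective A.mulVec :=
        Matrix.mulVec_injective_iff_isUnit.mpr
          ((Matrix.isUnit_iff_isUnit_det A).mpr (isUnit_iff_ne_zero.mpr hAdet))
      apply hinj
      rw [hAx, Matrix.mulVec_zero]
    have hv'z : v' = 0 := by
      funext k
      simp only [Pi.zero_apply]
      rcases lt_or_ge (k : ℕ) (p - 1) with hk | hk
      · have hk' : k = Fin.castLE hqn ⟨k, hk⟩ := by ext; rfl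
        rw [hk']
        have h3 := congrFun hxz ⟨k, hk⟩
        exact h3
      · have hk2 : (k : ℕ) - (p - 1) < m := by omega
        have hk' : k = emb ⟨(k : ℕ) - (p - 1), hk2⟩ := by
          rw [hemb]; ext; simp; omega
        rw [hk']
        exact hv'emb _
    have := sub_eq_zero.mp (hv' ▸ hv'z)
    exact this
  -- assemble the basis
  set S := LinearMap.ker (Matrix.mulVecLin (jacobianFF f)) with hS
  set wk : Fin m → S := fun i => ⟨w i, by rw [LinearMap.mem_ker]; exact hker i⟩ with hwk
  have hlik : LinearIndependent (FractionRing (MvPolynomial (Fin n) K)) wk := by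
    apply LinearIndependent.of_comp S.subtype
    exact hli
  have hsp : ⊤ ≤ Submodule.span (FractionRing (MvPolynomial (Fin n) K)) (Set.range wk) := by
    rintro ⟨v, hv⟩ -
    have hv0 : (jacobianFF f).mulVecLin v = 0 := LinearMap.mem_ker.mp hv
    have hvr := hrepr v hv0
    have hvs : (⟨v, hv⟩ : S) = ∑ j : Fin m, v (emb j) • wk j := by
      apply Subtype.ext
      push_cast
      exact hvr
    rw [hvs]
    exact Submodule.sum_mem _ fun j _ =>
      Submodule.smul_mem _ _ (Submodule.subset_span ⟨j, rfl⟩)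
  set B0 : Module.Basis (Fin m) (FractionRing (MvPolynomial (Fin n) K)) S := Module.Basis.mk hlik hsp with hB0
  have hcard : m = n - p + 1 := by omega
  set B : Module.Basis (Fin (n - p + 1)) (FractionRing (MvPolynomial (Fin n) K)) S := B0.reindex (finCongr hcard) with hB
  -- degree bound for δ
  have hMd : ∀ i j, (M i j).totalDegree ≤ d - 1 := fun i j =>
    pderiv_totalDegree_le (f i) _ (hdeg i)
  have hδdeg : δ.totalDegree ≤ (p - 1) * (d - 1) := by
    rw [← hMdet]
    exact det_totalDegree_le M (d - 1) hMd
  refine ⟨?_, hδdeg, B, ?_⟩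
  · rw [Module.finrank_eq_card_basis B, Fintype.card_fin]
  · intro i k
    set j : Fin m := (finCongr hcard).symm i with hj
    have hBi : ((B i : S) : Fin n → FractionRing (MvPolynomial (Fin n) K)) = w j := by
      rw [hB, Module.Basis.reindex_apply, hB0, Module.Basis.mk_apply]
    refine ⟨u j k, ?_, ?_⟩
    · simp only [hu]
      split
      · rename_i hk
        rw [totalDegree_neg, Matrix.cramer_apply]
        refine det_totalDegree_le _ (d - 1) ?_ |>.trans le_rfl
        intro a b
        rw [Matrix.updateCol_apply]
        split
        · exact pderiv_totalDegree_le (f a) _ (hdeg a)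
        · exact hMd a b
      · split
        · exact hδdeg
        · simp
    · rw [hBi]
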